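/- Let 𝒱 be a finite set of integers and let b̄_n be the number of bridges of length n with steps in 𝒱, so that B̄(t) = Σ_{n≥0} b̄_n tⁿ ∈ ℚ[[t]] has constant term 1. Then for every n ≥ 1 the coefficient [tⁿ] log B̄(t) of the formal logarithm of B̄(t) is nonnegative. -/

import Mathlib

/-- The `n`-th coefficient of the formal logarithm `log F = Σ_{k≥1} (-1)^{k-1} (F-1)^k / k`
of a power series `F` with constant term `1` (for such `F`, only the terms with
`1 ≤ k ≤ n` contribute to the coefficient of `tⁿ`). -/
noncomputable def logCoeff {A : Type*} [CommRing A] [Algebra ℚ A]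
    (F : PowerSeries A) (n : ℕ) : A :=
  ∑ k ∈ Finset.Icc 1 n, ((-1 : ℚ) ^ (k - 1) / k) • PowerSeries.coeff n ((F - 1) ^ k)

/-- The number of bridges of length `n` with steps in `V`: sequences of `n` elements
of `V` summing to `0`. -/
noncomputable def bridgeCount (V : Finset ℤ) (n : ℕ) : ℕ :=
  Nat.card {v : Fin n → ℤ // (∀ l, v l ∈ V) ∧ ∑ l, v l = 0}

/-- The generating function `B̄(t) ∈ ℚ[[t]]` of bridges with steps in `V`. -/
noncomputable def bridgeSeries (V : Finset ℤ) : PowerSeries ℚ :=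
  PowerSeries.mk fun n => (bridgeCount V n : ℚ)

namespace BridgeAux

open PowerSeries Finset

/-! ### Partial sums -/

/-- Partial sum of the first `j` entries of `v`. -/
def psum {n : ℕ} (v : Fin n → ℤ) (j : ℕ) : ℤ :=
  ∑ i ∈ Finset.range j, if h : i < n then v ⟨i, h⟩ else 0

lemma psum_succ {n : ℕ} (v : Fin n → ℤ) (j : ℕ) :
    psum v (j + 1) = psum v j + if h : j < n then v ⟨j, h⟩ else 0 :=
  Finset.sum_range_succ _ _

lemma psum_eq_sum {n : ℕ} (v : Fin n → ℤ) : psum v n = ∑ l, v l := by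
  rw [psum, ← Fin.sum_univ_eq_sum_range]
  apply Finset.sum_congr rfl
  intro i _
  rw [dif_pos i.isLt]

lemma psum_congr {m n : ℕ} (hmn : m ≤ n) (w : Fin m → ℤ) (v : Fin n → ℤ)
    (hw : ∀ i (h : i < m), w ⟨i, h⟩ = v ⟨i, h.trans_le hmn⟩) {j : ℕ} (hj : j ≤ m) :
    psum w j = psum v j := by
  apply Finset.sum_congr rfl
  intro i hi
  rw [Finset.mem_range] at hi
  have h1 : i < m := lt_of_lt_of_le hi hj
  rw [dif_pos h1, dif_pos (h1.trans_le hmn), hw]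

lemma psum_shift {m n : ℕ} (hmn : m ≤ n) (v : Fin n → ℤ) (u : Fin (n - m) → ℤ)
    (hu : ∀ i (h : i < n - m), u ⟨i, h⟩ = v ⟨m + i, by omega⟩) (j : ℕ) :
    psum u j = psum v (m + j) - psum v m := by
  induction j with
  | zero => simp [psum]
  | succ j ih =>
    have key : (if h : j < n - m then u ⟨j, h⟩ else 0)
        = (if h : m + j < n then v ⟨m + j, h⟩ else 0) := by
      by_cases h : j < n - m
      · rw [dif_pos h, dif_pos (by omega), hu j h]
      · rw [dif_neg h, dif_neg (by omega)]
    have : m + (j + 1) = (m + j) + 1 := by omega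
    rw [psum_succ, ih, this, psum_succ, key]
    ring

/-! ### Primitive bridges -/

/-- Number of primitive bridges of length `n`: bridges none of whose nonempty proper
prefixes sums to zero. -/
noncomputable def primCount (V : Finset ℤ) (n : ℕ) : ℕ :=
  Nat.card {v : Fin n → ℤ // (∀ l, v l ∈ V) ∧ (∑ l, v l = 0) ∧
    ∀ j, 0 < j → j < n → psum v j ≠ 0}

/-- Generating series of primitive bridges (with constant coefficient `0`). -/
noncomputable def primSeries (V : Finset ℤ) : PowerSeries ℚ :=
  PowerSeries.mk fun n => if n = 0 then 0 else (primCount V n : ℚ)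

lemma finite_aux (V : Finset ℤ) {n : ℕ} (P : (Fin n → ℤ) → Prop) :
    Finite {v : Fin n → ℤ // (∀ l, v l ∈ V) ∧ P v} := by
  apply Finite.of_injective (f := fun v : {v : Fin n → ℤ // (∀ l, v l ∈ V) ∧ P v} =>
    (fun l => (⟨v.1 l, v.2.1 l⟩ : V) : Fin n → V))
  intro a b h
  apply Subtype.ext
  funext l
  exact congrArg Subtype.val (congrFun h l)

/-! ### Gluing and splitting of bridges -/

/-- Gluing a word of length `m` and a word of length `n - m` into a word of length `n`. -/
def glue {m n : ℕ} (hmn : m ≤ n) (w : Fin m → ℤ) (u : Fin (n - m) → ℤ) : Fin n → ℤ :=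
  fun i => if h : i.val < m then w ⟨i, h⟩ else u ⟨i.val - m, by omega⟩

lemma glue_left {m n : ℕ} (hmn : m ≤ n) (w : Fin m → ℤ) (u : Fin (n - m) → ℤ)
    (i : ℕ) (h : i < m) : w ⟨i, h⟩ = glue hmn w u ⟨i, h.trans_le hmn⟩ := by
  simp [glue, h]

lemma glue_right {m n : ℕ} (hmn : m ≤ n) (w : Fin m → ℤ) (u : Fin (n - m) → ℤ)
    (i : ℕ) (h : i < n - m) : u ⟨i, h⟩ = glue hmn w u ⟨m + i, by omega⟩ := by
  simp only [glue]
  rw [dif_neg (by omega)]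
  congr 1
  apply Fin.ext
  simp

lemma psum_glue_left {m n : ℕ} (hmn : m ≤ n) (w : Fin m → ℤ) (u : Fin (n - m) → ℤ)
    {j : ℕ} (hj : j ≤ m) : psum (glue hmn w u) j = psum w j :=
  (psum_congr hmn w _ (glue_left hmn w u) hj).symm

lemma psum_glue_total {m n : ℕ} (hmn : m ≤ n) (w : Fin m → ℤ) (u : Fin (n - m) → ℤ) :
    psum (glue hmn w u) n = psum w m + psum u (n - m) := by
  have h2 := psum_shift hmn (glue hmn w u) u (glue_right hmn w u) (n - m)
  have h3 : m + (n - m) = n := by omega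
  rw [h3] at h2
  have h1 := psum_glue_left hmn w u (le_refl m)
  linarith

lemma glue_isBridge (V : Finset ℤ) {m n : ℕ} (hmn : m ≤ n) {w : Fin m → ℤ}
    {u : Fin (n - m) → ℤ} (hwV : ∀ l, w l ∈ V) (hw0 : ∑ l, w l = 0)
    (huV : ∀ l, u l ∈ V) (hu0 : ∑ l, u l = 0) :
    (∀ l, glue hmn w u l ∈ V) ∧ ∑ l, glue hmn w u l = 0 := by
  constructor
  · intro l
    unfold glue
    split
    · exact hwV _
    · exact huV _
  · rw [← psum_eq_sum, psum_glue_total, psum_eq_sum, psum_eq_sum, hw0, hu0]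
    ring

/-- First-return decomposition: the count of bridges of length `n ≥ 1` equals the sum over
`m` of (primitive bridges of length `m`) × (bridges of length `n - m`). -/
lemma bridge_rec (V : Finset ℤ) {n : ℕ} (hn : 0 < n) :
    bridgeCount V n = ∑ m ∈ Finset.Icc 1 n, primCount V m * bridgeCount V (n - m) := by
  classical
  set Br := fun (k : ℕ) => {v : Fin k → ℤ // (∀ l, v l ∈ V) ∧ ∑ l, v l = 0} with hBr
  set Pr := fun (k : ℕ) => {v : Fin k → ℤ // (∀ l, v l ∈ V) ∧ (∑ l, v l = 0) ∧
    ∀ j, 0 < j → j < k → psum v j ≠ 0} with hPr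
  set T := (Σ m : {m : ℕ // m ∈ Finset.Icc 1 n}, Pr (m : ℕ) × Br (n - (m : ℕ))) with hT
  let F : T → Br n := fun x =>
    ⟨glue (Finset.mem_Icc.mp x.1.2).2 x.2.1.1 x.2.2.1,
      glue_isBridge V _ x.2.1.2.1 x.2.1.2.2.1 x.2.2.2.1 x.2.2.2.2⟩
  have hbij : Function.Bijective F := by
    constructor
    · -- injective
      rintro ⟨⟨m, hmem⟩, ⟨w, hwV, hw0, hwp⟩, ⟨u, huV, hu0⟩⟩
        ⟨⟨m', hmem'⟩, ⟨w', hwV', hw0', hwp'⟩, ⟨u', huV', hu0'⟩⟩ hxy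
      have hmn : m ≤ n := (Finset.mem_Icc.mp hmem).2
      have hmn' : m' ≤ n := (Finset.mem_Icc.mp hmem').2
      have hm1 : 1 ≤ m := (Finset.mem_Icc.mp hmem).1
      have hm1' : 1 ≤ m' := (Finset.mem_Icc.mp hmem').1
      have hg : glue hmn w u = glue hmn' w' u' := congrArg Subtype.val hxy
      have hz : psum (glue hmn w u) m = 0 := by
        rw [psum_glue_left hmn w u le_rfl, psum_eq_sum, hw0]
      have hz' : psum (glue hmn' w' u') m' = 0 := by
        rw [psum_glue_left hmn' w' u' le_rfl, psum_eq_sum, hw0']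
      have hne : ∀ j, 0 < j → j < m → psum (glue hmn w u) j ≠ 0 := by
        intro j hj0 hjm
        rw [psum_glue_left hmn w u hjm.le]
        exact hwp j hj0 hjm
      have hne' : ∀ j, 0 < j → j < m' → psum (glue hmn' w' u') j ≠ 0 := by
        intro j hj0 hjm
        rw [psum_glue_left hmn' w' u' hjm.le]
        exact hwp' j hj0 hjm
      have hmm' : m = m' := by
        rcases lt_trichotomy m m' with hlt | heq | hgt
        · exact absurd (hg ▸ hz) (hne' m hm1 hlt)
        · exact heq
        · exact absurd (hg.symm ▸ hz') (hne m' hm1' hgt)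
      subst hmm'
      have hww' : w = w' := by
        funext i
        have h1 := glue_left hmn w u i.1 i.2
        have h2 := glue_left hmn' w' u' i.1 i.2
        rw [Fin.eta] at h1 h2
        rw [h1, h2, hg]
      have huu' : u = u' := by
        funext i
        have h1 := glue_right hmn w u i.1 i.2
        have h2 := glue_right hmn' w' u' i.1 i.2
        rw [Fin.eta] at h1 h2
        rw [h1, h2, hg]
      subst hww'
      subst huu'
      rfl
    · -- surjective
      rintro ⟨v, hvV, hv0⟩
      have hex : ∃ j, 0 < j ∧ psum v j = 0 := ⟨n, hn, by rw [psum_eq_sum]; exact hv0⟩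
      set m := Nat.find hex with hmdef
      have hm : 0 < m ∧ psum v m = 0 := Nat.find_spec hex
      have hmn : m ≤ n := Nat.find_min' hex ⟨hn, by rw [psum_eq_sum]; exact hv0⟩
      have hmin : ∀ j, 0 < j → j < m → psum v j ≠ 0 := fun j hj0 hjm hc =>
        Nat.find_min hex hjm ⟨hj0, hc⟩
      set w : Fin m → ℤ := fun i => v ⟨i.1, lt_of_lt_of_le i.2 hmn⟩ with hwdef
      set u : Fin (n - m) → ℤ := fun i => v ⟨m + i.1, by omega⟩ with hudef
      have hpw : ∀ {j}, j ≤ m → psum w j = psum v j := fun hj =>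
        psum_congr hmn w v (fun i h => rfl) hj
      have hpu := psum_shift hmn v u (fun i h => rfl) (n - m)
      have hmnn : m + (n - m) = n := by omega
      refine ⟨⟨⟨m, Finset.mem_Icc.mpr ⟨hm.1, hmn⟩⟩,
        ⟨w, fun l => hvV _, ?_, ?_⟩, ⟨u, fun l => hvV _, ?_⟩⟩, ?_⟩
      · rw [← psum_eq_sum, hpw le_rfl]; exact hm.2
      · intro j hj0 hjm
        rw [hpw hjm.le]
        exact hmin j hj0 hjm
      · rw [← psum_eq_sum, hpu, hmnn, psum_eq_sum, hv0, hm.2]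
        ring
      · apply Subtype.ext
        funext i
        show glue hmn w u i = v i
        unfold glue
        split
        · next h => exact congrArg v (Fin.ext rfl)
        · next h =>
          show u _ = v i
          rw [hudef]
          exact congrArg v (Fin.ext (by simp; omega))
  -- now count
  haveI : ∀ (k : ℕ), Finite (Br k) := fun k => finite_aux V _
  haveI : ∀ (k : ℕ), Finite (Pr k) := fun k => finite_aux V _
  letI : ∀ (k : ℕ), Fintype (Br k) := fun k => Fintype.ofFinite _
  letI : ∀ (k : ℕ), Fintype (Pr k) := fun k => Fintype.ofFinite _
  have hcard : bridgeCount V n = Nat.card T :=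
    Nat.card_congr (Equiv.ofBijective F hbij).symm
  rw [hcard, hT, Nat.card_eq_fintype_card, Fintype.card_sigma]
  rw [← Finset.sum_coe_sort (Finset.Icc 1 n)
    (fun m => primCount V m * bridgeCount V (n - m))]
  apply Finset.sum_congr rfl
  intro m _
  rw [Fintype.card_prod, primCount, bridgeCount, Nat.card_eq_fintype_card,
    Nat.card_eq_fintype_card]

/-! ### The power series identity -/

lemma sum_Icc_one {M : Type*} [AddCommMonoid M] (n : ℕ) (f : ℕ → M) :
    ∑ k ∈ Finset.Icc 1 n, f k = ∑ j ∈ Finset.range n, f (j + 1) := by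
  rw [← Finset.Ico_add_one_right_eq_Icc, Finset.sum_Ico_eq_sum_range]
  simp [add_comm]

lemma bridgeCount_zero (V : Finset ℤ) : bridgeCount V 0 = 1 := by
  haveI : Unique {v : Fin 0 → ℤ // (∀ l, v l ∈ V) ∧ ∑ l, v l = 0} :=
    { default := ⟨fun i => i.elim0, fun l => l.elim0, by simp⟩
      uniq := fun a => Subtype.ext (funext fun l => l.elim0) }
  exact Nat.card_unique

/-- The power-series identity `B̄ · (1 - A) = 1`. -/
lemma bridge_mul_one_sub_prim (V : Finset ℤ) :
    bridgeSeries V * (1 - primSeries V) = 1 := by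
  have hfactor : bridgeSeries V * (1 - primSeries V)
      = bridgeSeries V - primSeries V * bridgeSeries V := by ring
  ext n
  rw [hfactor, map_sub]
  rcases Nat.eq_zero_or_pos n with hn | hn
  · subst hn
    simp [bridgeSeries, primSeries, bridgeCount_zero, coeff_mul]
  · have hAB : coeff n (primSeries V * bridgeSeries V) = coeff n (bridgeSeries V) := by
      rw [coeff_mul, Finset.Nat.sum_antidiagonal_eq_sum_range_succ_mk,
        Finset.sum_range_succ']
      have h0 : coeff 0 (primSeries V) * coeff (n - 0) (bridgeSeries V) = 0 := by
        simp [primSeries]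
      rw [h0, add_zero, ← sum_Icc_one n
        (fun k => coeff k (primSeries V) * coeff (n - k) (bridgeSeries V))]
      have hterm : ∀ k ∈ Finset.Icc 1 n,
          coeff k (primSeries V) * coeff (n - k) (bridgeSeries V)
            = (primCount V k : ℚ) * (bridgeCount V (n - k) : ℚ) := by
        intro k hk
        have hk1 : k ≠ 0 := by
          have := (Finset.mem_Icc.mp hk).1; omega
        simp [primSeries, bridgeSeries, hk1]
      rw [Finset.sum_congr rfl hterm]
      have := bridge_rec V hn
      simp only [bridgeSeries, coeff_mk]
      rw [this]
      push_cast
      rfl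
    rw [hAB, sub_self]
    have hn0 : n ≠ 0 := by omega
    simp [hn0]

/-! ### Nonnegativity of coefficients -/

lemma coeff_prim_nonneg (V : Finset ℤ) (n : ℕ) :
    0 ≤ PowerSeries.coeff n (primSeries V) := by
  simp only [primSeries, coeff_mk]
  split <;> positivity

lemma coeff_pow_nonneg {A : PowerSeries ℚ} (hA : ∀ n, 0 ≤ coeff n A) (k n : ℕ) :
    0 ≤ coeff n (A ^ k) := by
  induction k generalizing n with
  | zero =>
    simp only [pow_zero, coeff_one]
    split <;> norm_num
  | succ k ih =>
    rw [pow_succ, coeff_mul]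
    apply Finset.sum_nonneg
    intro p _
    exact mul_nonneg (ih p.1) (hA p.2)

/-! ### The key algebraic identity -/

/-- If `B (1 - A) = 1` with `A` of zero constant term, then the
log-coefficients of `B` are the coefficients of `Σ_k A^k / k`. -/
lemma logCoeff_eq (B A : PowerSeries ℚ) (hA : constantCoeff A = 0)
    (h : B * (1 - A) = 1) {n : ℕ} (hn : 1 ≤ n) :
    logCoeff B n = ∑ k ∈ Finset.Icc 1 n, (1 / k : ℚ) * coeff n (A ^ k) := by
  rw [logCoeff]
  have hB : constantCoeff B = 1 := by
    have h0 := congrArg (constantCoeff) h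
    simp [hA] at h0
    exact h0
  set L : PowerSeries ℚ := ∑ k ∈ Finset.Icc 1 n, ((-1 : ℚ) ^ (k - 1) / k) • (B - 1) ^ k with hL
  set M : PowerSeries ℚ := ∑ k ∈ Finset.Icc 1 n, ((1 : ℚ) / k) • A ^ k with hM
  have hLc : coeff n L
      = ∑ k ∈ Finset.Icc 1 n, ((-1 : ℚ) ^ (k - 1) / k) • coeff n ((B - 1) ^ k) := by
    rw [hL, map_sum]
    exact Finset.sum_congr rfl fun k _ => by rw [map_smul]
  have hMc : coeff n M = ∑ k ∈ Finset.Icc 1 n, (1 / k : ℚ) * coeff n (A ^ k) := by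
    rw [hM, map_sum]
    exact Finset.sum_congr rfl fun k _ => by rw [map_smul, smul_eq_mul]
  have dsubB : d⁄dX ℚ (B - 1) = d⁄dX ℚ B := by
    rw [map_sub]; simp
  -- derivative of L
  have hdL : (d⁄dX ℚ L) = (∑ j ∈ Finset.range n, (1 - B) ^ j) * d⁄dX ℚ B := by
    rw [hL, map_sum, Finset.sum_mul]
    have step : ∀ k ∈ Finset.Icc 1 n,
        d⁄dX ℚ (((-1 : ℚ) ^ (k - 1) / k) • (B - 1) ^ k) = (1 - B) ^ (k - 1) * d⁄dX ℚ B := by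
      intro k hk
      have hk1 : 1 ≤ k := (Finset.mem_Icc.mp hk).1
      have hk0 : (k : ℚ) ≠ 0 := by positivity
      rw [Derivation.map_smul, Derivation.leibniz_pow, dsubB, smul_eq_mul,
        ← Nat.cast_smul_eq_nsmul ℚ, smul_smul, div_mul_cancel₀ _ hk0,
        ← smul_mul_assoc, ← smul_pow, neg_smul, one_smul, neg_sub]
    rw [Finset.sum_congr rfl step, sum_Icc_one n (fun k => (1 - B) ^ (k - 1) * d⁄dX ℚ B)]
    simp
  have hdM : (d⁄dX ℚ M) = (∑ j ∈ Finset.range n, A ^ j) * d⁄dX ℚ A := by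
    rw [hM, map_sum, Finset.sum_mul]
    have step : ∀ k ∈ Finset.Icc 1 n,
        d⁄dX ℚ (((1 : ℚ) / k) • A ^ k) = A ^ (k - 1) * d⁄dX ℚ A := by
      intro k hk
      have hk1 : 1 ≤ k := (Finset.mem_Icc.mp hk).1
      have hk0 : (k : ℚ) ≠ 0 := by positivity
      rw [Derivation.map_smul, Derivation.leibniz_pow, smul_eq_mul,
        ← Nat.cast_smul_eq_nsmul ℚ, smul_smul, one_div, inv_mul_cancel₀ hk0, one_smul]
    rw [Finset.sum_congr rfl step, sum_Icc_one n (fun k => A ^ (k - 1) * d⁄dX ℚ A)]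
    simp
  -- geometric sums
  have geomB : (∑ j ∈ Finset.range n, (1 - B) ^ j) * B = 1 - (1 - B) ^ n := by
    have := geom_sum_mul (1 - B) n
    have hBe : (1 - B) - 1 = -B := by ring
    rw [hBe] at this
    linear_combination -this
  have geomA : (∑ j ∈ Finset.range n, A ^ j) * (1 - A) = 1 - A ^ n := by
    have := geom_sum_mul A n
    linear_combination -this
  -- differentiate h
  have hd : (1 - A) * d⁄dX ℚ B = B * d⁄dX ℚ A := by
    have hD : d⁄dX ℚ (B * (1 - A)) = 0 := by rw [h]; simp
    rw [Derivation.leibniz, smul_eq_mul, smul_eq_mul, map_sub] at hD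
    simp only [Derivation.map_one_eq_zero] at hD
    linear_combination hD
  -- the key identity
  have key : d⁄dX ℚ L - d⁄dX ℚ M = B * d⁄dX ℚ A * (A ^ n - (1 - B) ^ n) := by
    have e1 : (d⁄dX ℚ L) * B = (1 - (1 - B) ^ n) * d⁄dX ℚ B := by
      rw [hdL, mul_assoc, mul_comm (d⁄dX ℚ B) B, ← mul_assoc, geomB]
    have e2 : (d⁄dX ℚ M) * (1 - A) = (1 - A ^ n) * d⁄dX ℚ A := by
      rw [hdM, mul_assoc, mul_comm (d⁄dX ℚ A) (1 - A), ← mul_assoc, geomA]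
    linear_combination (1 - A) * e1 - B * e2 + (1 - (1 - B) ^ n) * hd +
      (d⁄dX ℚ M - d⁄dX ℚ L) * h
  -- coefficient extraction
  have hcoeff : coeff (n - 1) (d⁄dX ℚ L - d⁄dX ℚ M) = 0 := by
    rw [key]
    have dvd1 : (X : ℚ⟦X⟧) ^ n ∣ A ^ n := pow_dvd_pow_of_dvd (X_dvd_iff.mpr hA) n
    have dvd2 : (X : ℚ⟦X⟧) ^ n ∣ (1 - B) ^ n :=
      pow_dvd_pow_of_dvd (X_dvd_iff.mpr (by simp [hB])) n
    have dvd : (X : ℚ⟦X⟧) ^ n ∣ B * d⁄dX ℚ A * (A ^ n - (1 - B) ^ n) :=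
      Dvd.dvd.mul_left (dvd_sub dvd1 dvd2) _
    exact X_pow_dvd_iff.mp dvd (n - 1) (by omega)
  have hn1 : n - 1 + 1 = n := by omega
  rw [map_sub, coeff_derivative, coeff_derivative, hn1, sub_eq_zero] at hcoeff
  have hne : ((n - 1 : ℕ) : ℚ) + 1 ≠ 0 := by positivity
  have hfin := mul_right_cancel₀ hne hcoeff
  rw [hLc, hMc] at hfin
  exact hfin

end BridgeAux

/-- The coefficients of the formal logarithm of the bridge generating function are
nonnegative. -/
theorem logCoeff_bridgeSeries_nonneg (V : Finset ℤ) :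
    ∀ n : ℕ, 1 ≤ n → 0 ≤ logCoeff (bridgeSeries V) n := by
  intro n hn
  rw [BridgeAux.logCoeff_eq (bridgeSeries V) (BridgeAux.primSeries V)
    (by simp [BridgeAux.primSeries])
    (BridgeAux.bridge_mul_one_sub_prim V) hn]
  apply Finset.sum_nonneg
  intro k hk
  apply mul_nonneg (by positivity)
  exact BridgeAux.coeff_pow_nonneg (BridgeAux.coeff_prim_nonneg V) k n
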